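/- arXiv:2407.07069 — 2 statements merged into one kernel-verified Lean document; each statement's English description precedes it below -/
import Mathlib

section
/- Let H be a Hilbert space, S a bounded projection on H, and M a bounded self-adjoint-type operator such that M + S is invertible on H, and define B = S − S(M+S)^{-1}S restricted to the range of S. If B is invertible on SH with inverse B^{-1}, then M is invertible on H and M^{-1} = (M+S)^{-1} + (M+S)^{-1} S B^{-1} S (M+S)^{-1}. -/
/-- Jensen–Nenciu inversion formula: let `S` be a bounded projection on a Hilbert
space `H`, `M` bounded with `M + S` invertible, and set `B = S − S(M+S)⁻¹S`
(viewed on the range of `S`).  If `B` has an inverse `Binv` on `SH` (i.e.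
`Binv = S Binv S`, `Binv B = B Binv = S` on `SH`), then `M` is invertible and
`M⁻¹ = (M+S)⁻¹ + (M+S)⁻¹ S B⁻¹ S (M+S)⁻¹`. -/
theorem stmt_12 {H : Type*} [NormedAddCommGroup H] [InnerProductSpace ℂ H] [CompleteSpace H]
    (S M : H →L[ℂ] H) (hS : S * S = S) (hMS : IsUnit (M + S))
    (Binv : H →L[ℂ] H)
    (hBrange : S * Binv = Binv) (hBrange' : Binv * S = Binv)
    (hBinv₁ : Binv * (S - S * Ring.inverse (M + S) * S) = S)
    (hBinv₂ : (S - S * Ring.inverse (M + S) * S) * Binv = S) :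
    IsUnit M ∧
      Ring.inverse M = Ring.inverse (M + S) +
        Ring.inverse (M + S) * S * Binv * S * Ring.inverse (M + S) := by
  set R := Ring.inverse (M + S) with hRdef
  have hAR : (M + S) * R = 1 := Ring.mul_inverse_cancel _ hMS
  have hRA : R * (M + S) = 1 := Ring.inverse_mul_cancel _ hMS
  set X := R + R * S * Binv * S * R with hX
  have h2 : S * Binv - S * R * S * Binv = S := by
    rw [sub_mul] at hBinv₂; exact hBinv₂
  have h1 : Binv * S - Binv * (S * R * S) = S := by
    rw [mul_sub] at hBinv₁; exact hBinv₁
  have hMX : M * X = 1 := by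
    calc M * X
        = ((M + S) * R) + ((M + S) * R) * (S * Binv * S * R) - S * R
            - (S * R * S * Binv) * (S * R) := by rw [hX]; noncomm_ring
      _ = 1 + (S * Binv - S * R * S * Binv) * (S * R) - S * R := by
            rw [hAR]; noncomm_ring
      _ = 1 + (S * S) * R - S * R := by rw [h2]; noncomm_ring
      _ = 1 := by rw [hS]; noncomm_ring
  have hXM : X * M = 1 := by
    calc X * M
        = (R * (M + S)) + (R * S * Binv * S) * (R * (M + S)) - R * S
            - (R * S) * (Binv * (S * R * S)) := by rw [hX]; noncomm_ring
      _ = 1 + (R * S) * (Binv * S - Binv * (S * R * S)) - R * S := by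
            rw [hRA]; noncomm_ring
      _ = 1 + R * (S * S) - R * S := by rw [h1]; noncomm_ring
      _ = 1 := by rw [hS]; noncomm_ring
  have hu : IsUnit M := ⟨⟨M, X, hMX, hXM⟩, rfl⟩
  refine ⟨hu, ?_⟩
  have : Ring.inverse M = X := by
    have := Ring.inverse_unit ⟨M, X, hMX, hXM⟩
    simpa using this
  rw [this, hX]
end

section
/- Let n ≥ 1 and β > n. Then the function (x,y) ↦ ⟨x⟩^{−β/2} |x−y|^{s} ⟨y⟩^{−β/2} is in L²(ℝⁿ × ℝⁿ) for every 0 ≤ s < (β−n)/2; in particular, for s = {n/2} + 3/2 and β > n + 3 the corresponding operator is Hilbert–Schmidt on L²(ℝⁿ). -/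
open MeasureTheory Real

lemma aux_le_two_mul (E : Type*) [NormedAddCommGroup E] (x y : E) :
    ‖x - y‖ ≤ 2 * (1 + ‖x‖ ^ 2) ^ ((1:ℝ)/2) * (1 + ‖y‖ ^ 2) ^ ((1:ℝ)/2) := by
  have hx : ‖x‖ ≤ (1 + ‖x‖ ^ 2) ^ ((1:ℝ)/2) := by
    rw [← Real.sqrt_eq_rpow, Real.le_sqrt (norm_nonneg x)]
    · nlinarith
    · positivity
  have hy : ‖y‖ ≤ (1 + ‖y‖ ^ 2) ^ ((1:ℝ)/2) := by
    rw [← Real.sqrt_eq_rpow, Real.le_sqrt (norm_nonneg y)]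
    · nlinarith
    · positivity
  have h1x : (1:ℝ) ≤ (1 + ‖x‖ ^ 2) ^ ((1:ℝ)/2) :=
    calc (1:ℝ) = 1 ^ ((1:ℝ)/2) := (Real.one_rpow _).symm
      _ ≤ _ := Real.rpow_le_rpow zero_le_one (by nlinarith) (by norm_num)
  have h1y : (1:ℝ) ≤ (1 + ‖y‖ ^ 2) ^ ((1:ℝ)/2) :=
    calc (1:ℝ) = 1 ^ ((1:ℝ)/2) := (Real.one_rpow _).symm
      _ ≤ _ := Real.rpow_le_rpow zero_le_one (by nlinarith) (by norm_num)
  calc ‖x - y‖ ≤ ‖x‖ + ‖y‖ := norm_sub_le x y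
    _ ≤ 2 * (1 + ‖x‖ ^ 2) ^ ((1:ℝ)/2) * (1 + ‖y‖ ^ 2) ^ ((1:ℝ)/2) := by
      nlinarith [hx, hy, h1x, h1y, norm_nonneg x, norm_nonneg y]

/-- For `β > n` and `0 ≤ s < (β−n)/2`, the function
`(x,y) ↦ ⟨x⟩^{−β/2} |x−y|^{s} ⟨y⟩^{−β/2}` is in `L²(ℝⁿ × ℝⁿ)`. -/
theorem stmt_15 (n : ℕ) (β s : ℝ) (hn : 1 ≤ n) (hβ : (n : ℝ) < β)
    (hs₀ : 0 ≤ s) (hs : s < (β - n) / 2) :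
    MemLp (fun z : EuclideanSpace ℝ (Fin n) × EuclideanSpace ℝ (Fin n) =>
        (1 + ‖z.1‖ ^ 2) ^ (-β / 4) * ‖z.1 - z.2‖ ^ s * (1 + ‖z.2‖ ^ 2) ^ (-β / 4))
      2 volume := by
  set E := EuclideanSpace ℝ (Fin n)
  have hcont : Continuous (fun z : E × E =>
      (1 + ‖z.1‖ ^ 2) ^ (-β / 4) * ‖z.1 - z.2‖ ^ s * (1 + ‖z.2‖ ^ 2) ^ (-β / 4)) := by
    apply Continuous.mul
    apply Continuous.mul
    · exact Continuous.rpow_const (by fun_prop) fun x => Or.inl (by positivity)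
    · exact Continuous.rpow_const (by fun_prop) fun x => Or.inr hs₀
    · exact Continuous.rpow_const (by fun_prop) fun x => Or.inl (by positivity)
  rw [memLp_two_iff_integrable_sq hcont.aestronglyMeasurable]
  have hr : (Module.finrank ℝ E : ℝ) < β - 2 * s := by
    rw [finrank_euclideanSpace_fin]; linarith
  have hint : Integrable (fun x : E => (1 + ‖x‖ ^ 2) ^ (-(β - 2 * s) / 2)) volume :=
    integrable_rpow_neg_one_add_norm_sq hr
  have hG : Integrable (fun z : E × E =>
      ((2:ℝ) ^ (2 * s) * (1 + ‖z.1‖ ^ 2) ^ (-(β - 2 * s) / 2)) *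
        (1 + ‖z.2‖ ^ 2) ^ (-(β - 2 * s) / 2)) volume := by
    rw [Measure.volume_eq_prod]
    exact (hint.const_mul _).mul_prod hint
  refine hG.mono' ((hcont.pow 2).aestronglyMeasurable) (Filter.Eventually.of_forall fun z => ?_)
  obtain ⟨x, y⟩ := z
  simp only
  have hax : (0:ℝ) < 1 + ‖x‖ ^ 2 := by positivity
  have hay : (0:ℝ) < 1 + ‖y‖ ^ 2 := by positivity
  rw [Real.norm_eq_abs, abs_of_nonneg (by positivity)]
  have key : ‖x - y‖ ^ (2 * s) ≤
      (2:ℝ) ^ (2 * s) * (1 + ‖x‖ ^ 2) ^ s * (1 + ‖y‖ ^ 2) ^ s := by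
    calc ‖x - y‖ ^ (2 * s)
        ≤ (2 * (1 + ‖x‖ ^ 2) ^ ((1:ℝ)/2) * (1 + ‖y‖ ^ 2) ^ ((1:ℝ)/2)) ^ (2 * s) :=
          Real.rpow_le_rpow (norm_nonneg _) (aux_le_two_mul E x y) (by linarith)
      _ = (2:ℝ) ^ (2 * s) * (1 + ‖x‖ ^ 2) ^ s * (1 + ‖y‖ ^ 2) ^ s := by
          rw [Real.mul_rpow (by positivity) (by positivity),
            Real.mul_rpow (by positivity) (by positivity),
            ← Real.rpow_mul hax.le, ← Real.rpow_mul hay.le,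
            show (1:ℝ)/2 * (2 * s) = s by ring]
  have hsq : ((1 + ‖x‖ ^ 2) ^ (-β / 4) * ‖x - y‖ ^ s * (1 + ‖y‖ ^ 2) ^ (-β / 4)) ^ 2
      = (1 + ‖x‖ ^ 2) ^ (-β / 2) * ‖x - y‖ ^ (2 * s) * (1 + ‖y‖ ^ 2) ^ (-β / 2) := by
    rw [mul_pow, mul_pow, ← Real.rpow_natCast ((1 + ‖x‖ ^ 2) ^ (-β / 4)),
      ← Real.rpow_natCast (‖x - y‖ ^ s), ← Real.rpow_natCast ((1 + ‖y‖ ^ 2) ^ (-β / 4)),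
      ← Real.rpow_mul hax.le, ← Real.rpow_mul (norm_nonneg _), ← Real.rpow_mul hay.le,
      Nat.cast_ofNat, show -β / 4 * 2 = -β / 2 by ring, show s * 2 = 2 * s by ring]
  rw [hsq]
  calc (1 + ‖x‖ ^ 2) ^ (-β / 2) * ‖x - y‖ ^ (2 * s) * (1 + ‖y‖ ^ 2) ^ (-β / 2)
      ≤ (1 + ‖x‖ ^ 2) ^ (-β / 2) *
          ((2:ℝ) ^ (2 * s) * (1 + ‖x‖ ^ 2) ^ s * (1 + ‖y‖ ^ 2) ^ s) *
          (1 + ‖y‖ ^ 2) ^ (-β / 2) := by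
        gcongr
    _ = (2:ℝ) ^ (2 * s) * (1 + ‖x‖ ^ 2) ^ (-(β - 2 * s) / 2) *
          (1 + ‖y‖ ^ 2) ^ (-(β - 2 * s) / 2) := by
        rw [show -(β - 2 * s) / 2 = -β / 2 + s by ring, Real.rpow_add hax,
          Real.rpow_add hay]
        ring
end
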